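/- For any real β and reals γ₁, γ₂, γ₃, the integral ∫_{S²} p₁²(p₃² − p₂²) exp(β(γ₁p₁² + γ₂p₂² + γ₃p₃²)) (1 − exp(β(γ₃−γ₂)(p₂²−p₃²))) dp, when multiplied by (γ₃ − γ₂)β, is nonnegative, and is strictly positive if β ≠ 0 and γ₂ ≠ γ₃. -/

import Mathlib

open MeasureTheory Real Set Function
open scoped NNReal ENNReal

lemma mul_exp_nonneg (s : ℝ) : 0 ≤ s * (Real.exp s - 1) := by
  rcases le_or_gt 0 s with h | h
  · nlinarith [Real.add_one_le_exp s]
  · nlinarith [Real.exp_lt_one_iff.mpr h]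

lemma mul_exp_pos {s : ℝ} (hs : s ≠ 0) : 0 < s * (Real.exp s - 1) := by
  rcases lt_or_gt_of_ne hs with h | h
  · nlinarith [Real.exp_lt_one_iff.mpr h]
  · nlinarith [Real.add_one_lt_exp hs]

lemma sqrt_sub_abs {u w : ℝ} (hu : 1/4 ≤ u) (hw : 1/4 ≤ w) :
    |Real.sqrt u - Real.sqrt w| ≤ |u - w| := by
  have h1 : Real.sqrt u ^ 2 = u := Real.sq_sqrt (by linarith)
  have h2 : Real.sqrt w ^ 2 = w := Real.sq_sqrt (by linarith)
  have h3 : (1/2:ℝ) ≤ Real.sqrt u := by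
    have := Real.sqrt_le_sqrt hu
    rwa [show Real.sqrt (1/4) = 1/2 by
      rw [show (1/4:ℝ) = (1/2)^2 by norm_num, Real.sqrt_sq (by norm_num)]] at this
  have h4 : (1/2:ℝ) ≤ Real.sqrt w := by
    have := Real.sqrt_le_sqrt hw
    rwa [show Real.sqrt (1/4) = 1/2 by
      rw [show (1/4:ℝ) = (1/2)^2 by norm_num, Real.sqrt_sq (by norm_num)]] at this
  rw [abs_sub_le_iff]
  constructor <;> nlinarith [le_abs_self (u - w), neg_abs_le (u - w)]

lemma sum_sq_eq_one {p : EuclideanSpace ℝ (Fin 3)} (hp : ‖p‖ = 1) :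
    p 0 ^ 2 + p 1 ^ 2 + p 2 ^ 2 = 1 := by
  rw [EuclideanSpace.norm_eq] at hp
  have := Real.sqrt_eq_one.mp hp
  simpa [Fin.sum_univ_three, Real.norm_eq_abs, sq_abs] using this


set_option maxHeartbeats 1000000 in
lemma cap_lt_top (e : Fin 3 ≃ Fin 3) {σ : ℝ} (hσ : σ = 1 ∨ σ = -1) :
    μH[2] {p : EuclideanSpace ℝ (Fin 3) | ‖p‖ = 1 ∧ 1/2 ≤ σ * p (e.symm 0)} < ⊤ := by
  have hσ2 : σ ^ 2 = 1 := by rcases hσ with h | h <;> rw [h] <;> norm_num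
  set D : Set (ℝ × ℝ) := {a | a.1 ^ 2 + a.2 ^ 2 ≤ 3/4} with hD
  set v : ℝ × ℝ → Fin 3 → ℝ :=
    fun a => ![σ * Real.sqrt (1 - a.1 ^ 2 - a.2 ^ 2), a.1, a.2] with hv
  set h : ℝ × ℝ → EuclideanSpace ℝ (Fin 3) :=
    fun a => (WithLp.equiv 2 (Fin 3 → ℝ)).symm (fun i => v a (e i)) with hh
  have habs : |σ| = 1 := by rcases hσ with h | h <;> rw [h] <;> norm_num
  -- Lipschitz
  have hlip : LipschitzOnWith 7 h D := by
    apply LipschitzOnWith.of_dist_le_mul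
    intro a ha b hb
    have ha1 : a.1 ^ 2 + a.2 ^ 2 ≤ 3/4 := ha
    have hb1 : b.1 ^ 2 + b.2 ^ 2 ≤ 3/4 := hb
    have e1 : |a.1 - b.1| ≤ dist a b := by
      rw [← Real.dist_eq, Prod.dist_eq]; exact le_max_left _ _
    have e2 : |a.2 - b.2| ≤ dist a b := by
      rw [← Real.dist_eq, Prod.dist_eq]; exact le_max_right _ _
    have hd0 : (0:ℝ) ≤ dist a b := dist_nonneg
    have ha11 : |a.1| ≤ 1 := by nlinarith [sq_abs a.1, abs_nonneg a.1, sq_nonneg a.2]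
    have ha21 : |a.2| ≤ 1 := by nlinarith [sq_abs a.2, abs_nonneg a.2, sq_nonneg a.1]
    have hb11 : |b.1| ≤ 1 := by nlinarith [sq_abs b.1, abs_nonneg b.1, sq_nonneg b.2]
    have hb21 : |b.2| ≤ 1 := by nlinarith [sq_abs b.2, abs_nonneg b.2, sq_nonneg b.1]
    have t1 : |b.1 ^ 2 - a.1 ^ 2| ≤ 2 * dist a b := by
      rw [show b.1 ^ 2 - a.1 ^ 2 = (b.1 - a.1) * (b.1 + a.1) by ring, abs_mul]
      have u1 : |b.1 - a.1| ≤ dist a b := by rw [abs_sub_comm]; exact e1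
      have u2 : |b.1 + a.1| ≤ 2 := (abs_add_le _ _).trans (by linarith)
      nlinarith [abs_nonneg (b.1 - a.1), abs_nonneg (b.1 + a.1)]
    have t2 : |b.2 ^ 2 - a.2 ^ 2| ≤ 2 * dist a b := by
      rw [show b.2 ^ 2 - a.2 ^ 2 = (b.2 - a.2) * (b.2 + a.2) by ring, abs_mul]
      have u1 : |b.2 - a.2| ≤ dist a b := by rw [abs_sub_comm]; exact e2
      have u2 : |b.2 + a.2| ≤ 2 := (abs_add_le _ _).trans (by linarith)
      nlinarith [abs_nonneg (b.2 - a.2), abs_nonneg (b.2 + a.2)]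
    have huw : |(1 - a.1 ^ 2 - a.2 ^ 2) - (1 - b.1 ^ 2 - b.2 ^ 2)| ≤ 4 * dist a b := by
      calc |(1 - a.1 ^ 2 - a.2 ^ 2) - (1 - b.1 ^ 2 - b.2 ^ 2)|
          = |(b.1 ^ 2 - a.1 ^ 2) + (b.2 ^ 2 - a.2 ^ 2)| := by ring_nf
        _ ≤ |b.1 ^ 2 - a.1 ^ 2| + |b.2 ^ 2 - a.2 ^ 2| := abs_add_le _ _
        _ ≤ 4 * dist a b := by linarith
    have hkey : |v a 0 - v b 0| ≤ 4 * dist a b := by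
      have hs := sqrt_sub_abs (u := 1 - a.1 ^ 2 - a.2 ^ 2) (w := 1 - b.1 ^ 2 - b.2 ^ 2)
        (by linarith) (by linarith)
      calc |v a 0 - v b 0|
          = |σ| * |Real.sqrt (1 - a.1 ^ 2 - a.2 ^ 2) - Real.sqrt (1 - b.1 ^ 2 - b.2 ^ 2)| := by
            rw [← abs_mul]; congr 1
            simp only [hv, Matrix.cons_val_zero]; ring
        _ ≤ |(1 - a.1 ^ 2 - a.2 ^ 2) - (1 - b.1 ^ 2 - b.2 ^ 2)| := by rw [habs, one_mul]; exact hs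
        _ ≤ 4 * dist a b := huw
    have hdist : dist (h a) (h b) = Real.sqrt (∑ i, dist (v a (e i)) (v b (e i)) ^ 2) := by
      rw [EuclideanSpace.dist_eq]
      congr 1
    rw [hdist]
    have hsum : (∑ i, dist (v a (e i)) (v b (e i)) ^ 2)
        = ∑ j, dist (v a j) (v b j) ^ 2 := Equiv.sum_comp e (fun j => dist (v a j) (v b j) ^ 2)
    rw [hsum, Fin.sum_univ_three]
    have hv1 : dist (v a 1) (v b 1) = |a.1 - b.1| := by
      simp [hv, Real.dist_eq]
    have hv2 : dist (v a 2) (v b 2) = |a.2 - b.2| := by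
      simp [hv, Real.dist_eq]
    have hv0 : dist (v a 0) (v b 0) ≤ 4 * dist a b := by
      rw [Real.dist_eq]; exact hkey
    have hbound : dist (v a 0) (v b 0) ^ 2 + dist (v a 1) (v b 1) ^ 2
        + dist (v a 2) (v b 2) ^ 2 ≤ ((7:ℝ) * dist a b) ^ 2 := by
      rw [hv1, hv2]
      have q0 : dist (v a 0) (v b 0) ^ 2 ≤ (4 * dist a b) ^ 2 :=
        pow_le_pow_left₀ dist_nonneg hv0 2
      have q1 : |a.1 - b.1| ^ 2 ≤ dist a b ^ 2 := pow_le_pow_left₀ (abs_nonneg _) e1 2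
      have q2 : |a.2 - b.2| ^ 2 ≤ dist a b ^ 2 := pow_le_pow_left₀ (abs_nonneg _) e2 2
      nlinarith [sq_nonneg (dist a b)]
    calc Real.sqrt (dist (v a 0) (v b 0) ^ 2 + dist (v a 1) (v b 1) ^ 2
            + dist (v a 2) (v b 2) ^ 2)
        ≤ Real.sqrt (((7:ℝ) * dist a b) ^ 2) := Real.sqrt_le_sqrt hbound
      _ = (7:ℝ) * dist a b := Real.sqrt_sq (by positivity)
      _ = ((7:ℝ≥0):ℝ) * dist a b := by push_cast; ring
  -- image
  have hsub : {p : EuclideanSpace ℝ (Fin 3) | ‖p‖ = 1 ∧ 1/2 ≤ σ * p (e.symm 0)} ⊆ h '' D := by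
    rintro p ⟨hp, hpi⟩
    have hsum1 : ∑ i, p i ^ 2 = 1 := by
      rw [EuclideanSpace.norm_eq] at hp
      have := Real.sqrt_eq_one.mp hp
      simpa [Real.norm_eq_abs, sq_abs] using this
    have hsum : p (e.symm 0) ^ 2 + p (e.symm 1) ^ 2 + p (e.symm 2) ^ 2 = 1 := by
      rw [← Fin.sum_univ_three (f := fun j => p (e.symm j) ^ 2)]
      rw [Equiv.sum_comp e.symm (fun i => p i ^ 2)]
      exact hsum1
    have hpi2 : 1/4 ≤ p (e.symm 0) ^ 2 := by nlinarith
    refine ⟨(p (e.symm 1), p (e.symm 2)), by simp only [hD, mem_setOf_eq]; nlinarith, ?_⟩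
    have hva : (fun i => v (p (e.symm 1), p (e.symm 2)) (e i))
        = (WithLp.equiv 2 (Fin 3 → ℝ)) p := by
      funext i
      have h3 : ∀ m : Fin 3, m = 0 ∨ m = 1 ∨ m = 2 := by decide
      have habs2 : |p (e.symm 0)| = σ * p (e.symm 0) := by
        rw [← abs_of_nonneg (a := σ * p (e.symm 0)) (by linarith), abs_mul, habs, one_mul]
      rcases h3 (e i) with h0 | h1 | h2
      · have hi : i = e.symm 0 := by rw [← h0, Equiv.symm_apply_apply]
        rw [h0, hi]
        show σ * Real.sqrt (1 - p (e.symm 1) ^ 2 - p (e.symm 2) ^ 2) = p (e.symm 0)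
        rw [show 1 - p (e.symm 1) ^ 2 - p (e.symm 2) ^ 2 = p (e.symm 0) ^ 2 by nlinarith,
          Real.sqrt_sq_eq_abs, habs2]
        linear_combination p (e.symm 0) * hσ2
      · have hi : i = e.symm 1 := by rw [← h1, Equiv.symm_apply_apply]
        rw [h1, hi]; rfl
      · have hi : i = e.symm 2 := by rw [← h2, Equiv.symm_apply_apply]
        rw [h2, hi]; rfl
    show (WithLp.equiv 2 (Fin 3 → ℝ)).symm (fun i => v (p (e.symm 1), p (e.symm 2)) (e i)) = p
    rw [hva]; simp
  -- finiteness
  have hDvol : μH[2] D < ⊤ := by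
    rw [hausdorffMeasure_prod_real]
    refine lt_of_le_of_lt (measure_mono (fun a (haD : a ∈ D) => ?_))
      (measure_closedBall_lt_top (x := ((0:ℝ),(0:ℝ))) (r := 1))
    have ha1 : a.1 ^ 2 + a.2 ^ 2 ≤ 3/4 := haD
    simp only [Metric.mem_closedBall, Prod.dist_eq]
    have h1 : |a.1| ≤ 1 := by nlinarith [sq_abs a.1, abs_nonneg a.1, sq_nonneg a.2]
    have h2 : |a.2| ≤ 1 := by nlinarith [sq_abs a.2, abs_nonneg a.2, sq_nonneg a.1]
    refine max_le ?_ ?_ <;> simpa [Real.dist_eq]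
  calc μH[2] {p : EuclideanSpace ℝ (Fin 3) | ‖p‖ = 1 ∧ 1/2 ≤ σ * p (e.symm 0)}
      ≤ μH[2] (h '' D) := measure_mono hsub
    _ ≤ ((7:ℝ≥0):ℝ≥0∞) ^ (2:ℝ) * μH[2] D := hlip.hausdorffMeasure_image_le (by norm_num)
    _ < ⊤ := ENNReal.mul_lt_top (ENNReal.rpow_lt_top_of_nonneg (by norm_num) (by simp)) hDvol

lemma S2_lt_top : μH[2] (Metric.sphere (0 : EuclideanSpace ℝ (Fin 3)) 1) < ⊤ := by
  set C : Fin 3 → ℝ → Set (EuclideanSpace ℝ (Fin 3)) :=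
    fun i σ => {p | ‖p‖ = 1 ∧ 1/2 ≤ σ * p i} with hC
  have hcov : Metric.sphere (0 : EuclideanSpace ℝ (Fin 3)) 1 ⊆
      (C 0 1 ∪ C 0 (-1)) ∪ ((C 1 1 ∪ C 1 (-1)) ∪ (C 2 1 ∪ C 2 (-1))) := by
    intro p hp
    rw [mem_sphere_zero_iff_norm] at hp
    have hs := sum_sq_eq_one hp
    have hmax : 1/2 ≤ |p 0| ∨ 1/2 ≤ |p 1| ∨ 1/2 ≤ |p 2| := by
      by_contra hc
      push_neg at hc
      obtain ⟨h0, h1, h2⟩ := hc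
      nlinarith [sq_abs (p 0), sq_abs (p 1), sq_abs (p 2),
        abs_nonneg (p 0), abs_nonneg (p 1), abs_nonneg (p 2)]
    have hone : ∀ i : Fin 3, 1/2 ≤ |p i| → p ∈ C i 1 ∪ C i (-1) := by
      intro i hi
      rcases le_or_gt 0 (p i) with h | h
      · exact Or.inl ⟨hp, by rw [abs_of_nonneg h] at hi; linarith⟩
      · exact Or.inr ⟨hp, by rw [abs_of_neg h] at hi; linarith⟩
    rcases hmax with h | h | h
    · exact Or.inl (hone 0 h)
    · exact Or.inr (Or.inl (hone 1 h))
    · exact Or.inr (Or.inr (hone 2 h))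
  have c00 : C 0 1 = {p : EuclideanSpace ℝ (Fin 3) | ‖p‖ = 1 ∧
      1/2 ≤ (1:ℝ) * p ((Equiv.refl (Fin 3)).symm 0)} := rfl
  have c01 : C 0 (-1) = {p : EuclideanSpace ℝ (Fin 3) | ‖p‖ = 1 ∧
      1/2 ≤ (-1:ℝ) * p ((Equiv.refl (Fin 3)).symm 0)} := rfl
  have e1 : ((Equiv.swap (0:Fin 3) 1).symm 0) = 1 := by decide
  have e2 : ((Equiv.swap (0:Fin 3) 2).symm 0) = 2 := by decide
  have c10 : C 1 1 = {p : EuclideanSpace ℝ (Fin 3) | ‖p‖ = 1 ∧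
      1/2 ≤ (1:ℝ) * p ((Equiv.swap (0:Fin 3) 1).symm 0)} := by rw [e1]
  have c11 : C 1 (-1) = {p : EuclideanSpace ℝ (Fin 3) | ‖p‖ = 1 ∧
      1/2 ≤ (-1:ℝ) * p ((Equiv.swap (0:Fin 3) 1).symm 0)} := by rw [e1]
  have c20 : C 2 1 = {p : EuclideanSpace ℝ (Fin 3) | ‖p‖ = 1 ∧
      1/2 ≤ (1:ℝ) * p ((Equiv.swap (0:Fin 3) 2).symm 0)} := by rw [e2]
  have c21 : C 2 (-1) = {p : EuclideanSpace ℝ (Fin 3) | ‖p‖ = 1 ∧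
      1/2 ≤ (-1:ℝ) * p ((Equiv.swap (0:Fin 3) 2).symm 0)} := by rw [e2]
  calc μH[2] (Metric.sphere (0 : EuclideanSpace ℝ (Fin 3)) 1)
      ≤ μH[2] ((C 0 1 ∪ C 0 (-1)) ∪ ((C 1 1 ∪ C 1 (-1)) ∪ (C 2 1 ∪ C 2 (-1)))) :=
        measure_mono hcov
    _ ≤ μH[2] (C 0 1 ∪ C 0 (-1)) + (μH[2] (C 1 1 ∪ C 1 (-1)) + μH[2] (C 2 1 ∪ C 2 (-1))) :=
        le_trans (measure_union_le _ _) (by gcongr; exact measure_union_le _ _)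
    _ ≤ (μH[2] (C 0 1) + μH[2] (C 0 (-1))) + ((μH[2] (C 1 1) + μH[2] (C 1 (-1)))
          + (μH[2] (C 2 1) + μH[2] (C 2 (-1)))) := by
        gcongr <;> exact measure_union_le _ _
    _ < ⊤ := by
        rw [c00, c01, c10, c11, c20, c21]
        have l1 := cap_lt_top (Equiv.refl (Fin 3)) (Or.inl rfl)
        have l2 := cap_lt_top (Equiv.refl (Fin 3)) (Or.inr rfl)
        have l3 := cap_lt_top (Equiv.swap (0:Fin 3) 1) (Or.inl rfl)
        have l4 := cap_lt_top (Equiv.swap (0:Fin 3) 1) (Or.inr rfl)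
        have l5 := cap_lt_top (Equiv.swap (0:Fin 3) 2) (Or.inl rfl)
        have l6 := cap_lt_top (Equiv.swap (0:Fin 3) 2) (Or.inr rfl)
        exact ENNReal.add_lt_top.mpr ⟨ENNReal.add_lt_top.mpr ⟨l1, l2⟩,
          ENNReal.add_lt_top.mpr ⟨ENNReal.add_lt_top.mpr ⟨l3, l4⟩,
            ENNReal.add_lt_top.mpr ⟨l5, l6⟩⟩⟩

lemma T_subset_pos :
    0 < μH[2] {p : EuclideanSpace ℝ (Fin 3) | ‖p‖ = 1 ∧ 1/2 < p 0 ∧ p 0 < 3/5 ∧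
      1/4 < p 1 ∧ p 1 < 3/10 ∧ 0 < p 2} := by
  set T : Set (EuclideanSpace ℝ (Fin 3)) := {p | ‖p‖ = 1 ∧ 1/2 < p 0 ∧ p 0 < 3/5 ∧
      1/4 < p 1 ∧ p 1 < 3/10 ∧ 0 < p 2} with hT
  set pr : EuclideanSpace ℝ (Fin 3) → ℝ × ℝ := fun p => (p 0, p 1) with hpr
  have hcoord : ∀ (p q : EuclideanSpace ℝ (Fin 3)) (i : Fin 3),
      dist (p i) (q i) ≤ dist p q := fun p q i =>
    (dist_le_pi_dist ((WithLp.equiv 2 _) p) ((WithLp.equiv 2 _) q) i).trans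
      (by simpa using (PiLp.lipschitzWith_ofLp 2 (fun _ : Fin 3 => ℝ)).dist_le_mul p q)
  have hprlip : LipschitzWith 1 pr := by
    apply LipschitzWith.of_dist_le_mul
    intro p q
    rw [Prod.dist_eq, NNReal.coe_one, one_mul]
    exact max_le (hcoord p q 0) (hcoord p q 1)
  have hR : Ioo (0.51:ℝ) 0.55 ×ˢ Ioo (0.26:ℝ) 0.29 ⊆ pr '' T := by
    rintro ⟨x, y⟩ ⟨⟨hx1, hx2⟩, ⟨hy1, hy2⟩⟩
    simp only [mem_Ioo] at hx1 hx2 hy1 hy2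
    set z := Real.sqrt (1 - x ^ 2 - y ^ 2) with hz
    have hz2 : (0:ℝ) < 1 - x ^ 2 - y ^ 2 := by nlinarith
    have hzpos : 0 < z := Real.sqrt_pos.mpr hz2
    set p : EuclideanSpace ℝ (Fin 3) := (WithLp.equiv 2 (Fin 3 → ℝ)).symm ![x, y, z] with hp
    have hp0 : p 0 = x := rfl
    have hp1 : p 1 = y := rfl
    have hp2 : p 2 = z := rfl
    have hnorm : ‖p‖ = 1 := by
      rw [EuclideanSpace.norm_eq, Fin.sum_univ_three]
      rw [show ‖p 0‖ = |x| by rw [hp0]; rfl, show ‖p 1‖ = |y| by rw [hp1]; rfl,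
        show ‖p 2‖ = |z| by rw [hp2]; rfl]
      simp only [sq_abs]
      rw [show x ^ 2 + y ^ 2 + z ^ 2 = 1 by
        rw [hz, Real.sq_sqrt (le_of_lt hz2)]; ring]
      exact Real.sqrt_one
    refine ⟨p, ⟨hnorm, ?_, ?_, ?_, ?_, ?_⟩, ?_⟩
    · rw [hp0]; linarith
    · rw [hp0]; linarith
    · rw [hp1]; linarith
    · rw [hp1]; linarith
    · rw [hp2]; exact hzpos
    · rw [hpr]; simp [hp0, hp1]
  have hvol : (0:ℝ≥0∞) < volume (Ioo (0.51:ℝ) 0.55 ×ˢ Ioo (0.26:ℝ) 0.29) := by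
    rw [Measure.volume_eq_prod, Measure.prod_prod, Real.volume_Ioo, Real.volume_Ioo]
    apply ENNReal.mul_pos <;> simp [ENNReal.ofReal_pos] <;> norm_num
  calc (0:ℝ≥0∞) < volume (Ioo (0.51:ℝ) 0.55 ×ˢ Ioo (0.26:ℝ) 0.29) := hvol
    _ = μH[2] (Ioo (0.51:ℝ) 0.55 ×ˢ Ioo (0.26:ℝ) 0.29) := by rw [hausdorffMeasure_prod_real]
    _ ≤ μH[2] (pr '' T) := measure_mono hR
    _ ≤ ((1:ℝ≥0):ℝ≥0∞) ^ (2:ℝ) * μH[2] T := hprlip.hausdorffMeasure_image_le (by norm_num) T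
    _ = μH[2] T := by simp

noncomputable def S2 : Set (EuclideanSpace ℝ (Fin 3)) := Metric.sphere 0 1

theorem symmetrized_integral_pos (β γ₁ γ₂ γ₃ : ℝ) :
    0 ≤ (γ₃ - γ₂) * β * ∫ p in S2, p 0 ^ 2 * (p 2 ^ 2 - p 1 ^ 2) *
        Real.exp (β * (γ₁ * p 0 ^ 2 + γ₂ * p 1 ^ 2 + γ₃ * p 2 ^ 2)) *
        (1 - Real.exp (β * (γ₃ - γ₂) * (p 1 ^ 2 - p 2 ^ 2))) ∂(μH[2]) ∧
    (β ≠ 0 → γ₂ ≠ γ₃ →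
      0 < (γ₃ - γ₂) * β * ∫ p in S2, p 0 ^ 2 * (p 2 ^ 2 - p 1 ^ 2) *
        Real.exp (β * (γ₁ * p 0 ^ 2 + γ₂ * p 1 ^ 2 + γ₃ * p 2 ^ 2)) *
        (1 - Real.exp (β * (γ₃ - γ₂) * (p 1 ^ 2 - p 2 ^ 2))) ∂(μH[2])) := by
  set G : EuclideanSpace ℝ (Fin 3) → ℝ := fun p =>
    (γ₃ - γ₂) * β * (p 0 ^ 2 * (p 2 ^ 2 - p 1 ^ 2) *
      Real.exp (β * (γ₁ * p 0 ^ 2 + γ₂ * p 1 ^ 2 + γ₃ * p 2 ^ 2)) *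
      (1 - Real.exp (β * (γ₃ - γ₂) * (p 1 ^ 2 - p 2 ^ 2)))) with hG
  have hGre : ∀ p : EuclideanSpace ℝ (Fin 3), G p =
      p 0 ^ 2 * Real.exp (β * (γ₁ * p 0 ^ 2 + γ₂ * p 1 ^ 2 + γ₃ * p 2 ^ 2)) *
      ((β * (γ₃ - γ₂) * (p 1 ^ 2 - p 2 ^ 2)) *
        (Real.exp (β * (γ₃ - γ₂) * (p 1 ^ 2 - p 2 ^ 2)) - 1)) := by
    intro p; rw [hG]; ring
  have key : ∀ p : EuclideanSpace ℝ (Fin 3), 0 ≤ G p := by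
    intro p
    rw [hGre p]
    exact mul_nonneg (mul_nonneg (sq_nonneg _) (Real.exp_pos _).le) (mul_exp_nonneg _)
  have hrw : (γ₃ - γ₂) * β * (∫ p in S2, p 0 ^ 2 * (p 2 ^ 2 - p 1 ^ 2) *
        Real.exp (β * (γ₁ * p 0 ^ 2 + γ₂ * p 1 ^ 2 + γ₃ * p 2 ^ 2)) *
        (1 - Real.exp (β * (γ₃ - γ₂) * (p 1 ^ 2 - p 2 ^ 2))) ∂(μH[2]))
      = ∫ p in S2, G p ∂(μH[2]) := (integral_const_mul _ _).symm
  constructor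
  · rw [hrw]
    exact integral_nonneg key
  · intro hβ hγ
    rw [hrw]
    -- continuity
    have hc : ∀ i : Fin 3, Continuous fun p : EuclideanSpace ℝ (Fin 3) => p i :=
      fun i => PiLp.continuous_apply 2 _ i
    have hcont : Continuous G := by
      apply Continuous.mul continuous_const
      apply Continuous.mul
      apply Continuous.mul
      · exact ((hc 0).pow 2).mul (((hc 2).pow 2).sub ((hc 1).pow 2))
      · exact Real.continuous_exp.comp (continuous_const.mul
          (((continuous_const.mul ((hc 0).pow 2)).add
            (continuous_const.mul ((hc 1).pow 2))).add
            (continuous_const.mul ((hc 2).pow 2))))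
      · exact continuous_const.sub (Real.continuous_exp.comp
          (continuous_const.mul (((hc 1).pow 2).sub ((hc 2).pow 2))))
    -- integrability
    haveI hfin : IsFiniteMeasure ((μH[2] : Measure (EuclideanSpace ℝ (Fin 3))).restrict S2) :=
      ⟨by rw [Measure.restrict_apply_univ]; exact S2_lt_top⟩
    have hS2meas : MeasurableSet S2 := Metric.isClosed_sphere.measurableSet
    have hint : Integrable G ((μH[2] : Measure (EuclideanSpace ℝ (Fin 3))).restrict S2) := by
      obtain ⟨C, hC⟩ := (isCompact_sphere (0 : EuclideanSpace ℝ (Fin 3)) 1).exists_bound_of_continuousOn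
        hcont.continuousOn
      refine ⟨hcont.aestronglyMeasurable.restrict, ?_⟩
      apply HasFiniteIntegral.of_bounded (C := C)
      exact ae_restrict_of_forall_mem hS2meas hC
    rw [integral_pos_iff_support_of_nonneg key hint]
    have hTsub : {p : EuclideanSpace ℝ (Fin 3) | ‖p‖ = 1 ∧ 1/2 < p 0 ∧ p 0 < 3/5 ∧
        1/4 < p 1 ∧ p 1 < 3/10 ∧ 0 < p 2} ⊆ support G ∩ S2 := by
      rintro p ⟨hp, h01, h02, h11, h12, h2⟩
      have hsq := sum_sq_eq_one hp
      constructor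
      · rw [mem_support]
        have hs0 : β * (γ₃ - γ₂) * (p 1 ^ 2 - p 2 ^ 2) ≠ 0 := by
          apply mul_ne_zero (mul_ne_zero hβ (sub_ne_zero.mpr (Ne.symm hγ)))
          have : p 1 ^ 2 < p 2 ^ 2 := by nlinarith
          intro hcon; nlinarith
        have := mul_exp_pos hs0
        have hpos : 0 < G p := by
          rw [hGre p]
          exact mul_pos (mul_pos (by positivity) (Real.exp_pos _)) this
        exact ne_of_gt hpos
      · rw [S2, mem_sphere_zero_iff_norm]; exact hp
    have hmeas : MeasurableSet (support G) :=
      (hcont.isOpen_support).measurableSet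
    rw [Measure.restrict_apply hmeas]
    exact lt_of_lt_of_le T_subset_pos (measure_mono hTsub)
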